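/- Let (Ω, 𝓕, P) be a probability space, let r, θ : Ω → ℝ be bounded measurable random variables, and let H > 0 and H' ∈ ℝ be real constants. Define the bounded linear operators on L²(Ω; ℝ): 𝒬ξ = H'ξ − H'E[ξ] + 2rHξ − HE[rξ] − HrE[ξ]; 𝒮ξ = Hθ(ξ − E[ξ]) with adjoint 𝒮*η = H(θη − E[θη]); and ℛη = Hη, so that ℛ⁻¹η = H⁻¹η. Then for every ξ ∈ L²(Ω; ℝ), E[((𝒬 − 𝒮*ℛ⁻¹𝒮)ξ)ξ] = E[(H' + H(2r − θ²))(ξ − E[ξ])²] + 2H · E[r(ξ − E[ξ])] · E[ξ]. In particular, if r is almost surely equal to a constant, then E[((𝒬 − 𝒮*ℛ⁻¹𝒮)ξ)ξ] = E[(H' + H(2r − θ²))(ξ − E[ξ])²]. -/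

import Mathlib

open MeasureTheory

/-- Pointwise action of `𝒬ξ = H'ξ − H'E[ξ] + 2rHξ − HE[rξ] − HrE[ξ]`. -/
noncomputable def Qop {Ω : Type*} [MeasurableSpace Ω] (P : MeasureTheory.Measure Ω)
    (r : Ω → ℝ) (H H' : ℝ) (ξ : Ω → ℝ) (ω : Ω) : ℝ :=
  H' * ξ ω - H' * (∫ ω', ξ ω' ∂P) + 2 * r ω * H * ξ ω -
    H * (∫ ω', r ω' * ξ ω' ∂P) - H * r ω * (∫ ω', ξ ω' ∂P)

/-- Pointwise action of `𝒮ξ = Hθ(ξ − E[ξ])`. -/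
noncomputable def Sop {Ω : Type*} [MeasurableSpace Ω] (P : MeasureTheory.Measure Ω)
    (θ : Ω → ℝ) (H : ℝ) (ξ : Ω → ℝ) (ω : Ω) : ℝ :=
  H * θ ω * (ξ ω - ∫ ω', ξ ω' ∂P)

/-- Pointwise action of `𝒮*η = H(θη − E[θη])`. -/
noncomputable def SstarOp {Ω : Type*} [MeasurableSpace Ω] (P : MeasureTheory.Measure Ω)
    (θ : Ω → ℝ) (H : ℝ) (η : Ω → ℝ) (ω : Ω) : ℝ :=
  H * (θ ω * η ω - ∫ ω', θ ω' * η ω' ∂P)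

/-- Pointwise action of `ℛ⁻¹η = H⁻¹η`. -/
noncomputable def RinvOp (H : ℝ) (η : Ω → ℝ) (ω : Ω) : ℝ := H⁻¹ * η ω

/-- With `𝒬ξ = H'ξ − H'E[ξ] + 2rHξ − HE[rξ] − HrE[ξ]`,
`𝒮ξ = Hθ(ξ − E[ξ])`, `𝒮*η = H(θη − E[θη])` and `ℛ⁻¹η = H⁻¹η`, for every `ξ ∈ L²(Ω; ℝ)`,
`E[((𝒬 − 𝒮*ℛ⁻¹𝒮)ξ)ξ] = E[(H' + H(2r − θ²))(ξ − E[ξ])²] + 2H · E[r(ξ − E[ξ])] · E[ξ]`;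
in particular, if `r` is a.s. constant, the last term vanishes. -/
theorem schur_complement_quadratic_form_meanVariance
    {Ω : Type*} [MeasurableSpace Ω] (P : Measure Ω) [IsProbabilityMeasure P]
    (r θ : Ω → ℝ) (hrm : Measurable r) (hθm : Measurable θ)
    (hrb : ∃ C : ℝ, ∀ ω, |r ω| ≤ C) (hθb : ∃ C : ℝ, ∀ ω, |θ ω| ≤ C)
    (H H' : ℝ) (hH : 0 < H) :
    ∀ ξ : Ω → ℝ, MemLp ξ 2 P →
      (∫ ω, (Qop P r H H' ξ ω - SstarOp P θ H (RinvOp H (Sop P θ H ξ)) ω) * ξ ω ∂P =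
        (∫ ω, (H' + H * (2 * r ω - θ ω ^ 2)) * (ξ ω - ∫ ω', ξ ω' ∂P) ^ 2 ∂P) +
          2 * H * (∫ ω, r ω * (ξ ω - ∫ ω', ξ ω' ∂P) ∂P) * (∫ ω', ξ ω' ∂P)) ∧
      ((∃ c : ℝ, ∀ᵐ ω ∂P, r ω = c) →
        ∫ ω, (Qop P r H H' ξ ω - SstarOp P θ H (RinvOp H (Sop P θ H ξ)) ω) * ξ ω ∂P =
          ∫ ω, (H' + H * (2 * r ω - θ ω ^ 2)) * (ξ ω - ∫ ω', ξ ω' ∂P) ^ 2 ∂P) := by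
  intro ξ hξ
  obtain ⟨Cr, hCr⟩ := hrb
  obtain ⟨Cθ, hCθ⟩ := hθb
  have hrn : ∀ ω, ‖r ω‖ ≤ Cr := fun ω => by simpa [Real.norm_eq_abs] using hCr ω
  have hθ2n : ∀ ω, ‖θ ω ^ 2‖ ≤ Cθ ^ 2 := fun ω => by
    have h := hCθ ω
    have := abs_nonneg (θ ω)
    simp only [Real.norm_eq_abs, abs_pow]
    nlinarith
  have iξ : Integrable ξ P := hξ.integrable (by norm_num)
  have iξ2 : Integrable (fun ω => ξ ω * ξ ω) P :=
    ((hξ.smul hξ (r := 1) (hpqr := ⟨by norm_num [ENNReal.inv_two_add_inv_two]⟩)).integrable le_rfl : Integrable (ξ • ξ) P)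
  have ir : Integrable r P :=
    (memLp_top_of_bound hrm.aestronglyMeasurable Cr (ae_of_all _ hrn)).integrable le_top
  have iθ2 : Integrable (fun ω => θ ω ^ 2) P :=
    (memLp_top_of_bound (hθm.pow_const 2).aestronglyMeasurable (Cθ ^ 2)
      (ae_of_all _ hθ2n)).integrable le_top
  have irξ : Integrable (fun ω => r ω * ξ ω) P := iξ.bdd_mul hrm.aestronglyMeasurable (ae_of_all _ hrn)
  have irξ2 : Integrable (fun ω => r ω * (ξ ω * ξ ω)) P :=
    iξ2.bdd_mul hrm.aestronglyMeasurable (ae_of_all _ hrn)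
  have iθ2ξ : Integrable (fun ω => θ ω ^ 2 * ξ ω) P :=
    iξ.bdd_mul (hθm.pow_const 2).aestronglyMeasurable (ae_of_all _ hθ2n)
  have iθ2ξ2 : Integrable (fun ω => θ ω ^ 2 * (ξ ω * ξ ω)) P :=
    iξ2.bdd_mul (hθm.pow_const 2).aestronglyMeasurable (ae_of_all _ hθ2n)
  set m := ∫ ω', ξ ω' ∂P with hmdef
  set A := ∫ ω, r ω * ξ ω ∂P with hAdef
  set B := ∫ ω, ξ ω * ξ ω ∂P with hBdef
  set Ar := ∫ ω, r ω ∂P with hArdef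
  set R2 := ∫ ω, r ω * (ξ ω * ξ ω) ∂P with hR2def
  set Tθ := ∫ ω, θ ω ^ 2 ∂P with hTθdef
  set T1 := ∫ ω, θ ω ^ 2 * ξ ω ∂P with hT1def
  set T2 := ∫ ω, θ ω ^ 2 * (ξ ω * ξ ω) ∂P with hT2def
  have key : ∀ (a1 a2 a3 a4 a5 a6 a7 a8 a9 : ℝ),
      ∫ ω, (a1 + a2 * ξ ω + a3 * (ξ ω * ξ ω) + a4 * r ω + a5 * (r ω * ξ ω)
        + a6 * (r ω * (ξ ω * ξ ω)) + a7 * θ ω ^ 2 + a8 * (θ ω ^ 2 * ξ ω)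
        + a9 * (θ ω ^ 2 * (ξ ω * ξ ω))) ∂P
      = a1 + a2 * m + a3 * B + a4 * Ar + a5 * A + a6 * R2 + a7 * Tθ + a8 * T1 + a9 * T2 := by
    intro a1 a2 a3 a4 a5 a6 a7 a8 a9
    have h1 : Integrable (fun _ : Ω => a1) P := integrable_const a1
    have h2 := iξ.const_mul a2
    have h3 := iξ2.const_mul a3
    have h4 := ir.const_mul a4
    have h5 := irξ.const_mul a5
    have h6 := irξ2.const_mul a6
    have h7 := iθ2.const_mul a7
    have h8 := iθ2ξ.const_mul a8
    have h9 := iθ2ξ2.const_mul a9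
    have I2 : Integrable (fun ω => a1 + a2 * ξ ω) P := h1.add h2
    have I3 : Integrable (fun ω => a1 + a2 * ξ ω + a3 * (ξ ω * ξ ω)) P := I2.add h3
    have I4 : Integrable (fun ω => a1 + a2 * ξ ω + a3 * (ξ ω * ξ ω) + a4 * r ω) P := I3.add h4
    have I5 : Integrable (fun ω => a1 + a2 * ξ ω + a3 * (ξ ω * ξ ω) + a4 * r ω
      + a5 * (r ω * ξ ω)) P := I4.add h5
    have I6 : Integrable (fun ω => a1 + a2 * ξ ω + a3 * (ξ ω * ξ ω) + a4 * r ω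
      + a5 * (r ω * ξ ω) + a6 * (r ω * (ξ ω * ξ ω))) P := I5.add h6
    have I7 : Integrable (fun ω => a1 + a2 * ξ ω + a3 * (ξ ω * ξ ω) + a4 * r ω
      + a5 * (r ω * ξ ω) + a6 * (r ω * (ξ ω * ξ ω)) + a7 * θ ω ^ 2) P := I6.add h7
    have I8 : Integrable (fun ω => a1 + a2 * ξ ω + a3 * (ξ ω * ξ ω) + a4 * r ω
      + a5 * (r ω * ξ ω) + a6 * (r ω * (ξ ω * ξ ω)) + a7 * θ ω ^ 2
      + a8 * (θ ω ^ 2 * ξ ω)) P := I7.add h8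
    calc ∫ ω, (a1 + a2 * ξ ω + a3 * (ξ ω * ξ ω) + a4 * r ω + a5 * (r ω * ξ ω)
          + a6 * (r ω * (ξ ω * ξ ω)) + a7 * θ ω ^ 2 + a8 * (θ ω ^ 2 * ξ ω)
          + a9 * (θ ω ^ 2 * (ξ ω * ξ ω))) ∂P
        = (∫ ω, (a1 + a2 * ξ ω + a3 * (ξ ω * ξ ω) + a4 * r ω + a5 * (r ω * ξ ω)
            + a6 * (r ω * (ξ ω * ξ ω)) + a7 * θ ω ^ 2 + a8 * (θ ω ^ 2 * ξ ω)) ∂P)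
          + ∫ ω, a9 * (θ ω ^ 2 * (ξ ω * ξ ω)) ∂P :=
          by rw [integral_add I8 h9]
      _ = ((∫ ω, (a1 + a2 * ξ ω + a3 * (ξ ω * ξ ω) + a4 * r ω + a5 * (r ω * ξ ω)
            + a6 * (r ω * (ξ ω * ξ ω)) + a7 * θ ω ^ 2) ∂P)
          + ∫ ω, a8 * (θ ω ^ 2 * ξ ω) ∂P) + ∫ ω, a9 * (θ ω ^ 2 * (ξ ω * ξ ω)) ∂P := by
          rw [integral_add I7 h8]
      _ = (((∫ ω, (a1 + a2 * ξ ω + a3 * (ξ ω * ξ ω) + a4 * r ω + a5 * (r ω * ξ ω)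
            + a6 * (r ω * (ξ ω * ξ ω))) ∂P)
          + ∫ ω, a7 * θ ω ^ 2 ∂P) + ∫ ω, a8 * (θ ω ^ 2 * ξ ω) ∂P)
          + ∫ ω, a9 * (θ ω ^ 2 * (ξ ω * ξ ω)) ∂P := by
          rw [integral_add I6 h7]
      _ = ((((∫ ω, (a1 + a2 * ξ ω + a3 * (ξ ω * ξ ω) + a4 * r ω + a5 * (r ω * ξ ω)) ∂P)
          + ∫ ω, a6 * (r ω * (ξ ω * ξ ω)) ∂P) + ∫ ω, a7 * θ ω ^ 2 ∂P)
          + ∫ ω, a8 * (θ ω ^ 2 * ξ ω) ∂P) + ∫ ω, a9 * (θ ω ^ 2 * (ξ ω * ξ ω)) ∂P := by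
          rw [integral_add I5 h6]
      _ = (((((∫ ω, (a1 + a2 * ξ ω + a3 * (ξ ω * ξ ω) + a4 * r ω) ∂P)
          + ∫ ω, a5 * (r ω * ξ ω) ∂P) + ∫ ω, a6 * (r ω * (ξ ω * ξ ω)) ∂P)
          + ∫ ω, a7 * θ ω ^ 2 ∂P) + ∫ ω, a8 * (θ ω ^ 2 * ξ ω) ∂P)
          + ∫ ω, a9 * (θ ω ^ 2 * (ξ ω * ξ ω)) ∂P := by
          rw [integral_add I4 h5]
      _ = ((((((∫ ω, (a1 + a2 * ξ ω + a3 * (ξ ω * ξ ω)) ∂P) + ∫ ω, a4 * r ω ∂P)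
          + ∫ ω, a5 * (r ω * ξ ω) ∂P) + ∫ ω, a6 * (r ω * (ξ ω * ξ ω)) ∂P)
          + ∫ ω, a7 * θ ω ^ 2 ∂P) + ∫ ω, a8 * (θ ω ^ 2 * ξ ω) ∂P)
          + ∫ ω, a9 * (θ ω ^ 2 * (ξ ω * ξ ω)) ∂P := by
          rw [integral_add I3 h4]
      _ = (((((((∫ ω, (a1 + a2 * ξ ω) ∂P) + ∫ ω, a3 * (ξ ω * ξ ω) ∂P) + ∫ ω, a4 * r ω ∂P)
          + ∫ ω, a5 * (r ω * ξ ω) ∂P) + ∫ ω, a6 * (r ω * (ξ ω * ξ ω)) ∂P)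
          + ∫ ω, a7 * θ ω ^ 2 ∂P) + ∫ ω, a8 * (θ ω ^ 2 * ξ ω) ∂P)
          + ∫ ω, a9 * (θ ω ^ 2 * (ξ ω * ξ ω)) ∂P := by
          rw [integral_add I2 h3]
      _ = ((((((((∫ ω, (a1 : ℝ) ∂P) + ∫ ω, a2 * ξ ω ∂P) + ∫ ω, a3 * (ξ ω * ξ ω) ∂P)
          + ∫ ω, a4 * r ω ∂P)
          + ∫ ω, a5 * (r ω * ξ ω) ∂P) + ∫ ω, a6 * (r ω * (ξ ω * ξ ω)) ∂P)
          + ∫ ω, a7 * θ ω ^ 2 ∂P) + ∫ ω, a8 * (θ ω ^ 2 * ξ ω) ∂P)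
          + ∫ ω, a9 * (θ ω ^ 2 * (ξ ω * ξ ω)) ∂P := by
          rw [integral_add h1 h2]
      _ = a1 + a2 * m + a3 * B + a4 * Ar + a5 * A + a6 * R2 + a7 * Tθ + a8 * T1 + a9 * T2 := by
          rw [integral_const_mul, integral_const_mul, integral_const_mul, integral_const_mul,
            integral_const_mul, integral_const_mul, integral_const_mul, integral_const_mul,
            integral_const]
          simp
          rfl
  have hsimp : ∀ (y x : ℝ), y * (H⁻¹ * (H * y * x)) = y ^ 2 * x := fun y x => by
    field_simp
  have hT : (∫ ω, θ ω ^ 2 * (ξ ω - m) ∂P) = T1 - m * Tθ := by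
    have : ∀ ω, θ ω ^ 2 * (ξ ω - m) = θ ω ^ 2 * ξ ω - m * θ ω ^ 2 := fun ω => by ring
    simp only [this]
    rw [integral_sub iθ2ξ (iθ2.const_mul m), integral_const_mul]
  have hRmean : (∫ ω, r ω * (ξ ω - m) ∂P) = A - m * Ar := by
    have : ∀ ω, r ω * (ξ ω - m) = r ω * ξ ω + (-m) * r ω := fun ω => by ring
    simp only [this]
    rw [integral_add irξ (ir.const_mul (-m)), integral_const_mul]
    ring
  have main : ∫ ω, (Qop P r H H' ξ ω - SstarOp P θ H (RinvOp H (Sop P θ H ξ)) ω) * ξ ω ∂P =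
      (∫ ω, (H' + H * (2 * r ω - θ ω ^ 2)) * (ξ ω - m) ^ 2 ∂P) +
        2 * H * (∫ ω, r ω * (ξ ω - m) ∂P) * m := by
    have hL : ∫ ω, (Qop P r H H' ξ ω - SstarOp P θ H (RinvOp H (Sop P θ H ξ)) ω) * ξ ω ∂P =
        0 + (-(H' * m) - H * A + H * (T1 - m * Tθ)) * m + H' * B + 0 * Ar + (-(H * m)) * A
          + (2 * H) * R2 + 0 * Tθ + (H * m) * T1 + (-H) * T2 := by
      simp only [Qop, SstarOp, RinvOp, Sop]
      simp only [hsimp]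
      rw [show (∫ ω, (H' * ξ ω - H' * m + 2 * r ω * H * ξ ω - H * A - H * r ω * m -
          H * (θ ω ^ 2 * (ξ ω - m) - ∫ ω', θ ω' ^ 2 * (ξ ω' - m) ∂P)) * ξ ω ∂P) =
          ∫ ω, ((0 : ℝ) + (-(H' * m) - H * A + H * (∫ ω', θ ω' ^ 2 * (ξ ω' - m) ∂P)) * ξ ω
            + H' * (ξ ω * ξ ω) + 0 * r ω + (-(H * m)) * (r ω * ξ ω)
            + (2 * H) * (r ω * (ξ ω * ξ ω)) + 0 * θ ω ^ 2 + (H * m) * (θ ω ^ 2 * ξ ω)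
            + (-H) * (θ ω ^ 2 * (ξ ω * ξ ω))) ∂P from integral_congr_ae
              (Filter.Eventually.of_forall fun ω => by ring), hT, key]
    have hR1 : ∫ ω, (H' + H * (2 * r ω - θ ω ^ 2)) * (ξ ω - m) ^ 2 ∂P =
        H' * m ^ 2 + (-(2 * H' * m)) * m + H' * B + (2 * H * m ^ 2) * Ar
          + (-(4 * H * m)) * A + (2 * H) * R2 + (-(H * m ^ 2)) * Tθ + (2 * H * m) * T1
          + (-H) * T2 := by
      rw [show (∫ ω, (H' + H * (2 * r ω - θ ω ^ 2)) * (ξ ω - m) ^ 2 ∂P) =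
          ∫ ω, (H' * m ^ 2 + (-(2 * H' * m)) * ξ ω + H' * (ξ ω * ξ ω)
            + (2 * H * m ^ 2) * r ω + (-(4 * H * m)) * (r ω * ξ ω)
            + (2 * H) * (r ω * (ξ ω * ξ ω)) + (-(H * m ^ 2)) * θ ω ^ 2
            + (2 * H * m) * (θ ω ^ 2 * ξ ω) + (-H) * (θ ω ^ 2 * (ξ ω * ξ ω))) ∂P from
          integral_congr_ae (Filter.Eventually.of_forall fun ω => by ring), key]
    rw [hL, hR1, hRmean]
    ring
  refine ⟨main, fun hc => ?_⟩
  obtain ⟨c, hc⟩ := hc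
  have hz : (∫ ω, r ω * (ξ ω - m) ∂P) = 0 := by
    rw [show (∫ ω, r ω * (ξ ω - m) ∂P) = ∫ ω, c * (ξ ω - m) ∂P from integral_congr_ae
      (hc.mono fun ω h => by dsimp only; rw [h]), integral_const_mul,
      integral_sub iξ (integrable_const m), integral_const]
    simp
    exact Or.inr (sub_self _)
  rw [main, hz]
  ring
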